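/- Let (Γ,p) be an Iterated Function System on [0,1] whose maps g_1,…,g_k are absolutely continuous homeomorphisms of [0,1] with absolutely continuous inverses. If the Markov operator P has a unique invariant measure μ in M_1(0,1), then μ is either absolutely continuous with respect to Lebesgue measure or singular with respect to Lebesgue measure. -/

import Mathlib

open MeasureTheory Set Filter Topology

noncomputable section

/-- The Markov operator of an iterated function system `(g, p)` on `[0,1]`. -/
def markovOp {k : ℕ} (g : Fin k → ℝ → ℝ) (p : Fin k → ℝ) (μ : Measure ℝ) : Measure ℝ :=
  ∑ i : Fin k, ENNReal.ofReal (p i) • Measure.map (g i) μ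

/-- `p` is a probability vector. -/
def ProbVec {k : ℕ} (p : Fin k → ℝ) : Prop :=
  (∀ i, 0 ≤ p i) ∧ ∑ i : Fin k, p i = 1

/-- Membership in `M₁(0,1)`: Borel probability measures on `[0,1]` giving full mass
to the open interval `(0,1)`. -/
def MemM1 (μ : Measure ℝ) : Prop :=
  IsProbabilityMeasure μ ∧ μ (Ioo (0 : ℝ) 1) = 1

/-- The set `N_{M,α}`. -/
def Nset (M α : ℝ) : Set (Measure ℝ) :=
  {μ | MemM1 μ ∧ ∀ x ∈ Icc (0 : ℝ) 1,
    μ (Icc (0 : ℝ) x) ≤ ENNReal.ofReal (M * x ^ α) ∧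
    μ (Icc (1 - x) 1) ≤ ENNReal.ofReal (M * x ^ α)}

/-- The class `C⁺_β`: continuous nondecreasing maps of `[0,1]` fixing `0` and `1`,
continuously differentiable on `[0,β]` and `[1-β,1]`. -/
structure CPlus (β : ℝ) (g : ℝ → ℝ) : Prop where
  mapsTo : MapsTo g (Icc (0 : ℝ) 1) (Icc (0 : ℝ) 1)
  contOn : ContinuousOn g (Icc (0 : ℝ) 1)
  mono : MonotoneOn g (Icc (0 : ℝ) 1)
  map_zero : g 0 = 0
  map_one : g 1 = 1
  c1_left : ContDiffOn ℝ 1 g (Icc (0 : ℝ) β)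
  c1_right : ContDiffOn ℝ 1 g (Icc (1 - β) 1)

/-- `g` is a homeomorphism of `[0,1]` (a continuous bijection of the compact
interval; continuity of the inverse is automatic). -/
def IsIccHomeo (g : ℝ → ℝ) : Prop :=
  MapsTo g (Icc (0 : ℝ) 1) (Icc (0 : ℝ) 1) ∧ InjOn g (Icc (0 : ℝ) 1) ∧
    SurjOn g (Icc (0 : ℝ) 1) (Icc (0 : ℝ) 1)

/-- Admissible iterated function system generated by homeomorphisms in `C⁺_β`:
strictly positive probabilities, maps moving every interior point both down and up,
and positive Lyapunov exponents at the common fixed points `0` and `1`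
(the one-sided derivatives there being positive). -/
structure Admissible (β : ℝ) {k : ℕ} (g : Fin k → ℝ → ℝ) (p : Fin k → ℝ) : Prop where
  cplus : ∀ i, CPlus β (g i)
  homeo : ∀ i, IsIccHomeo (g i)
  p_pos : ∀ i, 0 < p i
  p_sum : ∑ i : Fin k, p i = 1
  below : ∀ x ∈ Ioo (0 : ℝ) 1, ∃ i, g i x < x
  above : ∀ x ∈ Ioo (0 : ℝ) 1, ∃ j, x < g j x
  deriv0_pos : ∀ i, 0 < derivWithin (g i) (Icc (0 : ℝ) 1) 0
  deriv1_pos : ∀ i, 0 < derivWithin (g i) (Icc (0 : ℝ) 1) 1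
  lyap0 : 0 < ∑ i : Fin k, p i * Real.log (derivWithin (g i) (Icc (0 : ℝ) 1) 0)
  lyap1 : 0 < ∑ i : Fin k, p i * Real.log (derivWithin (g i) (Icc (0 : ℝ) 1) 1)

/-- Composition of the maps of an IFS along a finite word:
`wordComp g [i_n, …, i_1] = g i_n ∘ ⋯ ∘ g i_1`. -/
def wordComp {k : ℕ} (g : Fin k → ℝ → ℝ) : List (Fin k) → ℝ → ℝ
  | [], x => x
  | i :: w, x => g i (wordComp g w x)

/-- Composition of the first `n` maps along an infinite word `ω`:
`iterComp g ω n = g (ω (n-1)) ∘ ⋯ ∘ g (ω 0)`. -/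
def iterComp {k : ℕ} (g : Fin k → ℝ → ℝ) (ω : ℕ → Fin k) : ℕ → ℝ → ℝ
  | 0 => id
  | n + 1 => g (ω n) ∘ iterComp g ω n

/-- Supremum of `|f|` over a set `K`. -/
def supOn (K : Set ℝ) (f : ℝ → ℝ) : ℝ :=
  sSup ((fun x => |f x|) '' K)

/-- The Fortet–Mourier distance: the Fortet–Mourier norm of `μ - ν`. -/
def FMdist (μ ν : Measure ℝ) : ℝ :=
  sSup {r | ∃ f : ℝ → ℝ, (∀ x, |f x| ≤ 1) ∧ LipschitzWith 1 f ∧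
    r = (∫ x, f x ∂μ) - ∫ x, f x ∂ν}

/-- The distance `d₀` between two iterated function systems. -/
def dzero {k : ℕ} (S T : Fin k → ℝ → ℝ) (p q : Fin k → ℝ) : ℝ :=
  ∑ i : Fin k, (|p i - q i| + supOn (Icc (0 : ℝ) 1) (fun x => S i x - T i x))

/-- `g` is absolutely continuous on `[0,1]`. -/
def AbsCont (g : ℝ → ℝ) : Prop :=
  ∀ ε > 0, ∃ δ > 0, ∀ n : ℕ, ∀ a b : Fin n → ℝ,
    (∀ i, 0 ≤ a i ∧ a i ≤ b i ∧ b i ≤ 1) →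
    (Pairwise fun i j => Disjoint (Ioo (a i) (b i)) (Ioo (a j) (b j))) →
    ∑ i, (b i - a i) < δ → ∑ i, |g (b i) - g (a i)| < ε

/-- Membership in `M₁^ε`: some Borel subset of `[0,1]` of Lebesgue measure `< ε`
carries `μ`-mass `> 1 - ε/2`. -/
def MemM1eps (ε : ℝ) (μ : Measure ℝ) : Prop :=
  ∃ A : Set ℝ, MeasurableSet A ∧ A ⊆ Icc (0 : ℝ) 1 ∧
    volume A < ENNReal.ofReal ε ∧ ENNReal.ofReal (1 - ε / 2) < μ A

/-- Clamping of a real number to `[0,1]`. -/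
def clampI (x : ℝ) : ℝ := max 0 (min 1 x)

/-- A point of the space `F₀`: a `k`-tuple of homeomorphisms of `[0,1]` in `C⁺_β`
(together with their inverses) and a probability vector.  The maps are normalized
outside `[0,1]` by clamping, so that they are determined by their restrictions
to `[0,1]`. -/
structure Sys (β : ℝ) (k : ℕ) where
  g : Fin k → ℝ → ℝ
  ginv : Fin k → ℝ → ℝ
  p : Fin k → ℝ
  prob : ProbVec p
  cplus : ∀ i, CPlus β (g i)
  ginv_mapsTo : ∀ i, MapsTo (ginv i) (Icc (0 : ℝ) 1) (Icc (0 : ℝ) 1)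
  left_inv : ∀ i, ∀ x ∈ Icc (0 : ℝ) 1, ginv i (g i x) = x
  right_inv : ∀ i, ∀ y ∈ Icc (0 : ℝ) 1, g i (ginv i y) = y
  g_clamp : ∀ i x, g i x = g i (clampI x)
  ginv_clamp : ∀ i x, ginv i x = ginv i (clampI x)

/-- The metric `d` on the space of systems. -/
def dSys {β : ℝ} {k : ℕ} (A B : Sys β k) : ℝ :=
  ∑ i : Fin k,
    (|A.p i - B.p i|
      + supOn (Icc (0 : ℝ) 1) (fun x => A.g i x - B.g i x)
      + supOn (Icc (0 : ℝ) 1) (fun x => A.ginv i x - B.ginv i x)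
      + max
          (supOn (Icc (0 : ℝ) β)
            (fun x => derivWithin (A.g i) (Icc (0 : ℝ) β) x -
              derivWithin (B.g i) (Icc (0 : ℝ) β) x))
          (supOn (Icc (1 - β) 1)
            (fun x => derivWithin (A.g i) (Icc (1 - β) 1) x -
              derivWithin (B.g i) (Icc (1 - β) 1) x)))

/-- The set `F`: admissible systems all of whose maps are absolutely continuous. -/
def Fset (β : ℝ) (k : ℕ) : Set (Sys β k) :=
  {A | Admissible β A.g A.p ∧ ∀ i, AbsCont (A.g i)}

/-- Closure of a set of systems with respect to the metric `dSys`. -/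
def closureSys {β : ℝ} {k : ℕ} (S : Set (Sys β k)) : Set (Sys β k) :=
  {A | ∀ ε > 0, ∃ B ∈ S, dSys A B < ε}

/-- `S` is nowhere dense in the subspace `X` (with respect to `dSys`):
every ball centered in `X` contains a point of `X` some ball around which
misses `S ∩ X`. -/
def NowhereDenseIn {β : ℝ} {k : ℕ} (X S : Set (Sys β k)) : Prop :=
  ∀ A ∈ X, ∀ ε > 0, ∃ B ∈ X, dSys A B < ε ∧ ∃ δ > 0, ∀ C ∈ X ∩ S, δ ≤ dSys B C

/-- Cesàro averages `(ν + Pν + ⋯ + P^{n-1}ν)/n` of a measure under the Markov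
operator of an IFS. -/
def cesaro {k : ℕ} (g : Fin k → ℝ → ℝ) (p : Fin k → ℝ) (ν : Measure ℝ) (n : ℕ) :
    Measure ℝ :=
  (n : ENNReal)⁻¹ • ∑ j ∈ Finset.range n, (fun m => markovOp g p m)^[j] ν


/-! ### Auxiliary lemmas for the dichotomy theorem -/

/-- From absolute continuity, a two-point estimate (uniform continuity). -/
lemma absCont_pair {g : ℝ → ℝ} (h : AbsCont g) {ε : ℝ} (hε : 0 < ε) :
    ∃ δ > 0, ∀ x ∈ Icc (0:ℝ) 1, ∀ y ∈ Icc (0:ℝ) 1, |y - x| < δ → |g y - g x| < ε := by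
  obtain ⟨δ, hδ, H⟩ := h ε hε
  refine ⟨δ, hδ, fun x hx y hy hxy => ?_⟩
  have hmin : (0:ℝ) ≤ min x y := le_min hx.1 hy.1
  have hmax : max x y ≤ 1 := max_le hx.2 hy.2
  have key := H 1 (fun _ => min x y) (fun _ => max x y)
    (fun _ => ⟨hmin, min_le_max, hmax⟩)
    (fun i j hij => absurd (Subsingleton.elim i j) hij)
    (by
      rw [Fin.sum_univ_one]
      have h1 := abs_sub_lt_iff.mp hxy
      rcases le_total x y with h' | h'
      · rw [max_eq_right h', min_eq_left h']; exact h1.1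
      · rw [max_eq_left h', min_eq_right h']; exact h1.2)
  rw [Fin.sum_univ_one] at key
  rcases le_total x y with hxy' | hxy'
  · rwa [min_eq_left hxy', max_eq_right hxy'] at key
  · rw [min_eq_right hxy', max_eq_left hxy'] at key
    rwa [abs_sub_comm] at key

/-- An absolutely continuous function is continuous on `[0,1]`. -/
lemma AbsCont.continuousOn {g : ℝ → ℝ} (h : AbsCont g) : ContinuousOn g (Icc (0:ℝ) 1) := by
  rw [Metric.continuousOn_iff]
  intro b hb ε hε
  obtain ⟨δ, hδ, H⟩ := absCont_pair h hε
  refine ⟨δ, hδ, fun a ha hab => ?_⟩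
  rw [Real.dist_eq] at hab ⊢
  exact H b hb a ha hab

/-- A nonempty open order-connected subset of `(0,1)` is an open interval. -/
lemma open_ordConnected_eq_Ioo {s : Set ℝ} (ho : IsOpen s) (hc : OrdConnected s)
    (hne : s.Nonempty) (hsub : s ⊆ Ioo (0:ℝ) 1) :
    s = Ioo (sInf s) (sSup s) ∧ sInf s ∈ Icc (0:ℝ) 1 ∧ sSup s ∈ Icc (0:ℝ) 1 ∧
      sInf s ≤ sSup s := by
  have hbdd_b : BddBelow s := ⟨0, fun x hx => (hsub hx).1.le⟩
  have hbdd_a : BddAbove s := ⟨1, fun x hx => (hsub hx).2.le⟩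
  obtain ⟨z, hz⟩ := hne
  have h1 : sInf s ≤ sSup s := le_trans (csInf_le hbdd_b hz) (le_csSup hbdd_a hz)
  have hmem : s = Ioo (sInf s) (sSup s) := by
    apply Subset.antisymm
    · intro x hx
      obtain ⟨r, hr, hball⟩ := Metric.isOpen_iff.mp ho x hx
      have hx1 : x - r/2 ∈ s := hball (by
        rw [Metric.mem_ball, Real.dist_eq, show x - r/2 - x = -(r/2) by ring, abs_neg,
          abs_of_nonneg (by linarith)]
        linarith)
      have hx2 : x + r/2 ∈ s := hball (by
        rw [Metric.mem_ball, Real.dist_eq, show x + r/2 - x = r/2 by ring,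
          abs_of_nonneg (by linarith)]
        linarith)
      exact ⟨lt_of_le_of_lt (csInf_le hbdd_b hx1) (by linarith),
        lt_of_lt_of_le (by linarith) (le_csSup hbdd_a hx2)⟩
    · intro x hx
      obtain ⟨u, hu, hux⟩ := exists_lt_of_csInf_lt ⟨z, hz⟩ hx.1
      obtain ⟨v, hv, hxv⟩ := exists_lt_of_lt_csSup ⟨z, hz⟩ hx.2
      exact hc.out hu hv ⟨hux.le, hxv.le⟩
  refine ⟨hmem, ⟨le_csInf ⟨z, hz⟩ (fun x hx => (hsub hx).1.le),
      le_trans (csInf_le hbdd_b hz) (hsub hz).2.le⟩,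
    ⟨le_trans (hsub hz).1.le (le_csSup hbdd_a hz),
      csSup_le ⟨z, hz⟩ (fun x hx => (hsub hx).2.le)⟩, h1⟩

/-- Luzin's property (N): an absolutely continuous monotone map carries Lebesgue-null
subsets of `(0,1)` to Lebesgue-null sets. -/
lemma luzinN {g : ℝ → ℝ} (hac : AbsCont g)
    (hmono : MonotoneOn g (Icc (0:ℝ) 1) ∨ AntitoneOn g (Icc (0:ℝ) 1))
    {E : Set ℝ} (hE : E ⊆ Ioo (0:ℝ) 1) (hE0 : volume E = 0) :
    volume (g '' E) = 0 := by
  have key : ∀ ε : ℝ, 0 < ε → volume (g '' E) ≤ ENNReal.ofReal ε := by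
    intro ε hε
    obtain ⟨δ, hδ, H⟩ := hac ε hε
    obtain ⟨U, hEU, hUopen, hUvol⟩ :=
      Set.exists_isOpen_lt_of_lt E (ENNReal.ofReal δ)
        (by rw [hE0]; exact ENNReal.ofReal_pos.2 hδ)
    set V := U ∩ Ioo (0:ℝ) 1 with hVdef
    have hVopen : IsOpen V := hUopen.inter isOpen_Ioo
    have hVsub : V ⊆ Ioo (0:ℝ) 1 := inter_subset_right
    have hEV : E ⊆ V := subset_inter hEU hE
    have hVvol : volume V < ENNReal.ofReal δ :=
      lt_of_le_of_lt (measure_mono inter_subset_left) hUvol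
    set t : Set (Set ℝ) :=
      (fun q : ℚ => connectedComponentIn V (q:ℝ)) '' {q : ℚ | (q:ℝ) ∈ V} with htdef
    have htc : t.Countable := (Set.to_countable _).image _
    have hmem_t : ∀ s ∈ t, IsOpen s ∧ OrdConnected s ∧ s.Nonempty ∧ s ⊆ V := by
      rintro s ⟨q, hq, rfl⟩
      exact ⟨hVopen.connectedComponentIn,
        (isPreconnected_connectedComponentIn).ordConnected,
        ⟨_, mem_connectedComponentIn hq⟩, connectedComponentIn_subset _ _⟩
    have ht_disj : t.Pairwise Disjoint := by
      rintro s₁ ⟨q₁, hq₁, rfl⟩ s₂ ⟨q₂, hq₂, rfl⟩ hne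
      refine Set.disjoint_left.mpr fun z hz₁ hz₂ => hne ?_
      show connectedComponentIn V ↑q₁ = connectedComponentIn V ↑q₂
      rw [connectedComponentIn_eq (show z ∈ connectedComponentIn V ↑q₁ from hz₁),
        ← connectedComponentIn_eq (show z ∈ connectedComponentIn V ↑q₂ from hz₂)]
    have hVt : V ⊆ ⋃₀ t := by
      intro x hx
      have hopen : IsOpen (connectedComponentIn V x) := hVopen.connectedComponentIn
      have hnex : (connectedComponentIn V x).Nonempty := ⟨x, mem_connectedComponentIn hx⟩
      obtain ⟨q, hyc⟩ :=
        (Rat.denseRange_cast (𝕜 := ℝ)).exists_mem_open hopen hnex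
      refine ⟨connectedComponentIn V (q:ℝ), ⟨q, connectedComponentIn_subset V x hyc, rfl⟩, ?_⟩
      exact (connectedComponentIn_eq hyc) ▸ mem_connectedComponentIn hx
    haveI := htc.to_subtype
    have hInt : ∀ s : t, (s : Set ℝ) = Ioo (sInf (s : Set ℝ)) (sSup (s : Set ℝ)) ∧
        sInf (s : Set ℝ) ∈ Icc (0:ℝ) 1 ∧ sSup (s : Set ℝ) ∈ Icc (0:ℝ) 1 ∧
        sInf (s : Set ℝ) ≤ sSup (s : Set ℝ) := fun s => by
      obtain ⟨ho, hoc, hne, hsubV⟩ := hmem_t s s.2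
      exact open_ordConnected_eq_Ioo ho hoc hne (hsubV.trans hVsub)
    have himg : ∀ s : t, volume (g '' (s : Set ℝ)) ≤
        ENNReal.ofReal |g (sSup (s : Set ℝ)) - g (sInf (s : Set ℝ))| := by
      intro s
      obtain ⟨hIoo, hIcc1, hIcc2, hle⟩ := hInt s
      have hsubIcc : (s : Set ℝ) ⊆ Icc (0:ℝ) 1 :=
        (((hmem_t s s.2).2.2.2.trans hVsub)).trans Ioo_subset_Icc_self
      rcases hmono with hm | hm
      · have hsub' : g '' (s : Set ℝ) ⊆ Icc (g (sInf (s : Set ℝ))) (g (sSup (s : Set ℝ))) := by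
          rintro _ ⟨x, hx, rfl⟩
          have hxI : x ∈ Ioo (sInf (s : Set ℝ)) (sSup (s : Set ℝ)) := hIoo ▸ hx
          exact ⟨hm hIcc1 (hsubIcc hx) hxI.1.le, hm (hsubIcc hx) hIcc2 hxI.2.le⟩
        calc volume (g '' (s : Set ℝ)) ≤ volume (Icc (g (sInf (s:Set ℝ))) (g (sSup (s:Set ℝ)))) :=
              measure_mono hsub'
          _ = ENNReal.ofReal (g (sSup (s:Set ℝ)) - g (sInf (s:Set ℝ))) := Real.volume_Icc
          _ ≤ ENNReal.ofReal |g (sSup (s:Set ℝ)) - g (sInf (s:Set ℝ))| :=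
              ENNReal.ofReal_le_ofReal (le_abs_self _)
      · have hsub' : g '' (s : Set ℝ) ⊆ Icc (g (sSup (s : Set ℝ))) (g (sInf (s : Set ℝ))) := by
          rintro _ ⟨x, hx, rfl⟩
          have hxI : x ∈ Ioo (sInf (s : Set ℝ)) (sSup (s : Set ℝ)) := hIoo ▸ hx
          exact ⟨hm (hsubIcc hx) hIcc2 hxI.2.le, hm hIcc1 (hsubIcc hx) hxI.1.le⟩
        calc volume (g '' (s : Set ℝ)) ≤ volume (Icc (g (sSup (s:Set ℝ))) (g (sInf (s:Set ℝ)))) :=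
              measure_mono hsub'
          _ = ENNReal.ofReal (g (sInf (s:Set ℝ)) - g (sSup (s:Set ℝ))) := Real.volume_Icc
          _ ≤ ENNReal.ofReal |g (sSup (s:Set ℝ)) - g (sInf (s:Set ℝ))| :=
              ENNReal.ofReal_le_ofReal ((le_abs_self _).trans (abs_sub_comm _ _).le)
    have hsum : (∑' s : t, ENNReal.ofReal |g (sSup (s : Set ℝ)) - g (sInf (s : Set ℝ))|) ≤
        ENNReal.ofReal ε := by
      rw [ENNReal.tsum_eq_iSup_sum]
      refine iSup_le fun F => ?_
      set n := F.card with hndef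
      set e : Fin n ≃ {x // x ∈ F} := F.equivFin.symm with hedef
      set A : Fin n → ℝ := fun i => sInf ((e i).1 : Set ℝ) with hAdef
      set B : Fin n → ℝ := fun i => sSup ((e i).1 : Set ℝ) with hBdef
      have hAB : ∀ i, ((e i).1 : Set ℝ) = Ioo (A i) (B i) := fun i => (hInt (e i).1).1
      have hbound : ∀ i, 0 ≤ A i ∧ A i ≤ B i ∧ B i ≤ 1 := fun i =>
        ⟨(hInt (e i).1).2.1.1, (hInt (e i).1).2.2.2, (hInt (e i).1).2.2.1.2⟩
      have hdisj : Pairwise fun i j => Disjoint (Ioo (A i) (B i)) (Ioo (A j) (B j)) := by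
        intro i j hij
        rw [← hAB i, ← hAB j]
        refine ht_disj (e i).1.2 (e j).1.2 fun hEq => hij ?_
        exact e.injective (Subtype.ext (Subtype.ext hEq))
      have hlen : (∑ i, (B i - A i)) < δ := by
        have h1 : ENNReal.ofReal (∑ i, (B i - A i)) = ∑ i, ENNReal.ofReal (B i - A i) :=
          ENNReal.ofReal_sum_of_nonneg (fun i _ => sub_nonneg.2 (hbound i).2.1)
        have h2 : (∑ i, ENNReal.ofReal (B i - A i)) = volume (⋃ i, Ioo (A i) (B i)) := by
          rw [measure_iUnion hdisj (fun i => measurableSet_Ioo), tsum_fintype]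
          simp [Real.volume_Ioo]
        have h3 : (⋃ i, Ioo (A i) (B i)) ⊆ V := by
          refine iUnion_subset fun i => ?_
          rw [← hAB i]
          exact (hmem_t _ (e i).1.2).2.2.2
        have h4 : ENNReal.ofReal (∑ i, (B i - A i)) < ENNReal.ofReal δ := by
          rw [h1, h2]; exact lt_of_le_of_lt (measure_mono h3) hVvol
        exact (ENNReal.ofReal_lt_ofReal_iff_of_nonneg
          (Finset.sum_nonneg (fun i _ => sub_nonneg.2 (hbound i).2.1))).mp h4
      have hAC := H n A B hbound hdisj hlen
      calc (∑ s ∈ F, ENNReal.ofReal |g (sSup ((s : t) : Set ℝ)) - g (sInf ((s : t) : Set ℝ))|)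
          = ∑ i : Fin n, ENNReal.ofReal |g (B i) - g (A i)| := by
            rw [← Finset.sum_coe_sort F
              (fun s => ENNReal.ofReal |g (sSup ((s : t) : Set ℝ)) - g (sInf ((s:t) : Set ℝ))|),
              ← Equiv.sum_comp e]
        _ = ENNReal.ofReal (∑ i, |g (B i) - g (A i)|) :=
            (ENNReal.ofReal_sum_of_nonneg (fun i _ => abs_nonneg _)).symm
        _ ≤ ENNReal.ofReal ε := ENNReal.ofReal_le_ofReal hAC.le
    calc volume (g '' E) ≤ volume (⋃ s : t, g '' (s : Set ℝ)) := by
          refine measure_mono ?_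
          rintro _ ⟨x, hx, rfl⟩
          obtain ⟨s, hst, hxs⟩ := hVt (hEV hx)
          exact mem_iUnion.2 ⟨⟨s, hst⟩, mem_image_of_mem _ hxs⟩
      _ ≤ ∑' s : t, volume (g '' (s : Set ℝ)) := measure_iUnion_le _
      _ ≤ ∑' s : t, ENNReal.ofReal |g (sSup (s : Set ℝ)) - g (sInf (s : Set ℝ))| :=
          ENNReal.tsum_le_tsum himg
      _ ≤ ENNReal.ofReal ε := hsum
  refine le_antisymm ?_ zero_le
  refine ENNReal.le_of_forall_pos_le_add fun ε hε _ => ?_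
  rw [zero_add]
  have h := key ε (by exact_mod_cast hε)
  rwa [ENNReal.ofReal_coe_nnreal] at h

lemma markovOp_apply {k : ℕ} (g : Fin k → ℝ → ℝ) (p : Fin k → ℝ)
    (hmeas : ∀ i, Measurable (g i)) (ν : Measure ℝ) {s : Set ℝ} (hs : MeasurableSet s) :
    markovOp g p ν s = ∑ i : Fin k, ENNReal.ofReal (p i) * ν (g i ⁻¹' s) := by
  rw [markovOp, Measure.finset_sum_apply]
  exact Finset.sum_congr rfl fun i _ => by
    rw [Measure.smul_apply, Measure.map_apply (hmeas i) hs, smul_eq_mul]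

lemma markovOp_univ {k : ℕ} (g : Fin k → ℝ → ℝ) (p : Fin k → ℝ) (hp : ProbVec p)
    (hmeas : ∀ i, Measurable (g i)) (ν : Measure ℝ) :
    markovOp g p ν univ = ν univ := by
  rw [markovOp_apply g p hmeas ν MeasurableSet.univ]
  simp only [preimage_univ]
  rw [← Finset.sum_mul, ← ENNReal.ofReal_sum_of_nonneg (fun i _ => hp.1 i), hp.2,
    ENNReal.ofReal_one, one_mul]

lemma markovOp_add {k : ℕ} (g : Fin k → ℝ → ℝ) (p : Fin k → ℝ)
    (hmeas : ∀ i, Measurable (g i)) (ν₁ ν₂ : Measure ℝ) :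
    markovOp g p (ν₁ + ν₂) = markovOp g p ν₁ + markovOp g p ν₂ := by
  unfold markovOp
  rw [← Finset.sum_add_distrib]
  refine Finset.sum_congr rfl fun i _ => ?_
  rw [Measure.map_add _ _ (hmeas i), smul_add]

lemma markovOp_smul {k : ℕ} (g : Fin k → ℝ → ℝ) (p : Fin k → ℝ) (c : ENNReal) (ν : Measure ℝ) :
    markovOp g p (c • ν) = c • markovOp g p ν := by
  unfold markovOp
  rw [Finset.smul_sum]
  refine Finset.sum_congr rfl fun i _ => ?_
  rw [Measure.map_smul, smul_comm]

/-- If the sum of a singular and an a.c. measure is fixed by the Markov operator and the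
operator keeps the singular measure singular, then the singular measure itself is fixed. -/
lemma invariant_singularPart {k : ℕ} (g : Fin k → ℝ → ℝ) (p : Fin k → ℝ) (hp : ProbVec p)
    (hmeas : ∀ i, Measurable (g i)) (σ ρ : Measure ℝ)
    [IsFiniteMeasure σ] [IsFiniteMeasure ρ]
    (hσ : σ ⟂ₘ (volume : Measure ℝ)) (hρ : ρ ≪ (volume : Measure ℝ))
    (hPσ : markovOp g p σ ⟂ₘ (volume : Measure ℝ))
    (hfix : markovOp g p σ + markovOp g p ρ = σ + ρ) :
    markovOp g p σ = σ := by
  haveI : IsFiniteMeasure (markovOp g p σ) :=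
    ⟨by rw [markovOp_univ g p hp hmeas]; exact measure_lt_top _ _⟩
  haveI : IsFiniteMeasure (markovOp g p ρ) :=
    ⟨by rw [markovOp_univ g p hp hmeas]; exact measure_lt_top _ _⟩
  have h := congrArg (fun m : Measure ℝ => m.singularPart volume) hfix
  simp only [Measure.singularPart_add] at h
  rw [(Measure.singularPart_eq_self).mpr hPσ, (Measure.singularPart_eq_self).mpr hσ,
    Measure.singularPart_eq_zero_of_ac hρ, add_zero] at h
  have hu : markovOp g p σ univ + (markovOp g p ρ).singularPart volume univ = σ univ := by
    rw [← Measure.add_apply, h]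
  rw [markovOp_univ g p hp hmeas] at hu
  have h0 : (markovOp g p ρ).singularPart volume univ = 0 :=
    (ENNReal.add_right_inj (measure_ne_top σ univ)).mp (by rw [hu, add_zero])
  rw [Measure.measure_univ_eq_zero.mp h0, add_zero] at h
  exact h

/-- If the maps of an IFS are absolutely continuous homeomorphisms
of `[0,1]` with absolutely continuous inverses and the Markov operator has a
unique invariant measure `μ` in `M₁(0,1)`, then `μ` is either absolutely
continuous or singular with respect to Lebesgue measure. -/
theorem invariant_measure_dichotomy (k : ℕ)
    (g ginv : Fin k → ℝ → ℝ) (p : Fin k → ℝ) (hp : ProbVec p)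
    (hmeas : ∀ i, Measurable (g i)) (hmeasinv : ∀ i, Measurable (ginv i))
    (hmaps : ∀ i, MapsTo (g i) (Icc (0 : ℝ) 1) (Icc (0 : ℝ) 1))
    (hmapsinv : ∀ i, MapsTo (ginv i) (Icc (0 : ℝ) 1) (Icc (0 : ℝ) 1))
    (hli : ∀ i, ∀ x ∈ Icc (0 : ℝ) 1, ginv i (g i x) = x)
    (hri : ∀ i, ∀ y ∈ Icc (0 : ℝ) 1, g i (ginv i y) = y)
    (hac : ∀ i, AbsCont (g i)) (hacinv : ∀ i, AbsCont (ginv i))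
    (μ : Measure ℝ) (hμ : MemM1 μ) (hinv : markovOp g p μ = μ)
    (huniq : ∀ ν : Measure ℝ, MemM1 ν → markovOp g p ν = ν → ν = μ) :
    μ ≪ (volume : Measure ℝ) ∨ μ ⟂ₘ (volume : Measure ℝ) := by
  haveI hprob : IsProbabilityMeasure μ := hμ.1
  have hdec : μ.singularPart volume + volume.withDensity (μ.rnDeriv volume) = μ :=
    (μ.haveLebesgueDecomposition_add volume).symm
  have hμ₁ac : volume.withDensity (μ.rnDeriv volume) ≪ (volume : Measure ℝ) :=
    withDensity_absolutelyContinuous _ _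
  have hμ₂sing : μ.singularPart volume ⟂ₘ (volume : Measure ℝ) :=
    Measure.mutuallySingular_singularPart μ volume
  by_cases hzero : μ.singularPart volume = 0
  · left
    rw [← hdec, hzero, zero_add]
    exact hμ₁ac
  · right
    have hμ₂le : μ.singularPart volume ≤ μ := Measure.singularPart_le μ volume
    haveI : IsFiniteMeasure (μ.singularPart volume) := isFiniteMeasure_of_le μ hμ₂le
    haveI : IsFiniteMeasure (volume.withDensity (μ.rnDeriv volume)) :=
      isFiniteMeasure_of_le μ (Measure.withDensity_rnDeriv_le μ volume)
    -- `μ`, hence its singular part, is carried by `(0,1)`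
    have hcompl : μ (Ioo (0:ℝ) 1)ᶜ = 0 := by
      rw [measure_compl measurableSet_Ioo (measure_ne_top μ _), hμ.2, measure_univ, tsub_self]
    have hμ₂Ioo : μ.singularPart volume (Ioo (0:ℝ) 1)ᶜ = 0 :=
      le_antisymm (le_trans (hμ₂le _) hcompl.le) zero_le
    -- the singular set
    obtain ⟨S, hSm, hS0, hSc⟩ := hμ₂sing
    set S' := Sᶜ ∩ Ioo (0:ℝ) 1 with hS'def
    have hS'vol : volume S' = 0 := measure_mono_null inter_subset_left hSc
    have hS'c : μ.singularPart volume S'ᶜ = 0 := by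
      have hcompl' : S'ᶜ = S ∪ (Ioo (0:ℝ) 1)ᶜ := by
        rw [hS'def, compl_inter, compl_compl]
      rw [hcompl']
      exact measure_union_null hS0 hμ₂Ioo
    have hS'sub : S' ⊆ Ioo (0:ℝ) 1 := inter_subset_right
    -- monotonicity of the maps
    have hinj : ∀ i, InjOn (g i) (Icc (0:ℝ) 1) := fun i x hx y hy hxy => by
      rw [← hli i x hx, hxy, hli i y hy]
    have hmono : ∀ i, MonotoneOn (g i) (Icc (0:ℝ) 1) ∨ AntitoneOn (g i) (Icc (0:ℝ) 1) :=
      fun i =>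
        (ContinuousOn.strictMonoOn_of_injOn_Icc' zero_le_one (hac i).continuousOn
          (hinj i)).imp StrictMonoOn.monotoneOn StrictAntiOn.antitoneOn
    -- Luzin's property (N)
    have himg : ∀ i, volume (g i '' S') = 0 := fun i =>
      luzinN (hac i) (hmono i) hS'sub hS'vol
    set N := toMeasurable volume (⋃ i, g i '' S') with hNdef
    have hNvol : volume N = 0 := by
      rw [hNdef, measure_toMeasurable]
      exact le_antisymm ((measure_iUnion_le _).trans (by simp [himg])) zero_le
    have hNm : MeasurableSet N := measurableSet_toMeasurable _ _
    have hPμ₂N : markovOp g p (μ.singularPart volume) Nᶜ = 0 := by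
      rw [markovOp_apply g p hmeas _ hNm.compl]
      refine Finset.sum_eq_zero fun i _ => ?_
      have hsub : g i ⁻¹' Nᶜ ⊆ S'ᶜ := fun x hx hxS' =>
        hx (subset_toMeasurable _ _ (mem_iUnion.2 ⟨i, mem_image_of_mem _ hxS'⟩))
      rw [measure_mono_null hsub hS'c, mul_zero]
    have hPμ₂sing : markovOp g p (μ.singularPart volume) ⟂ₘ (volume : Measure ℝ) :=
      ⟨Nᶜ, hNm.compl, hPμ₂N, by rwa [compl_compl]⟩
    -- the singular part is invariant
    have hfix : markovOp g p (μ.singularPart volume) +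
        markovOp g p (volume.withDensity (μ.rnDeriv volume)) =
        μ.singularPart volume + volume.withDensity (μ.rnDeriv volume) := by
      rw [← markovOp_add g p hmeas, hdec, hinv]
    have hinv₂ : markovOp g p (μ.singularPart volume) = μ.singularPart volume :=
      invariant_singularPart g p hp hmeas _ _
        (Measure.mutuallySingular_singularPart μ volume) hμ₁ac hPμ₂sing hfix
    -- normalize and use uniqueness
    set c := μ.singularPart volume univ with hcdef
    have hc0 : c ≠ 0 := fun h => hzero (Measure.measure_univ_eq_zero.mp h)
    have hctop : c ≠ ⊤ := measure_ne_top _ _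
    set ν := c⁻¹ • μ.singularPart volume with hνdef
    have hν1 : IsProbabilityMeasure ν :=
      ⟨by rw [hνdef, Measure.smul_apply, smul_eq_mul, ← hcdef,
        ENNReal.inv_mul_cancel hc0 hctop]⟩
    have hνIoo : ν (Ioo (0:ℝ) 1) = 1 := by
      have hIoo : μ.singularPart volume (Ioo (0:ℝ) 1) = c := by
        have h := measure_add_measure_compl (μ := μ.singularPart volume)
          (measurableSet_Ioo (a := (0:ℝ)) (b := 1))
        rwa [hμ₂Ioo, add_zero] at h
      rw [hνdef, Measure.smul_apply, smul_eq_mul, hIoo, ENNReal.inv_mul_cancel hc0 hctop]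
    have hνinv : markovOp g p ν = ν := by
      rw [hνdef, markovOp_smul, hinv₂]
    have hνμ : ν = μ := huniq ν ⟨hν1, hνIoo⟩ hνinv
    rw [← hνμ, hνdef]
    exact (Measure.mutuallySingular_singularPart μ volume).smul _

end
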